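/- Let φ ∈ W^{2,∞}(ℝ^d) be real-valued with φ ≥ 0, and let C̃ = R̃ + iB̃ be a constant d×d complex matrix taking values in Σ_θ, with R̃_s = (R̃+R̃ᵀ)/2 and B̃_a = (B̃-B̃ᵀ)/2. Set C = φ C̃, so R_s = φ R̃_s and B_a = φ B̃_a. Then for every l and every complex symmetric d×d matrix U, ‖(∂_l B_a) U‖²_HS ≤ 8 ‖φ‖_{W^{2,∞}} ‖R̃_s‖ tr(U R_s Ū). -/

import Mathlib

set_option maxHeartbeats 1000000

open Matrix


lemma glaeser_aux {d : ℕ} (l : Fin d) (φ : (Fin d → ℝ) → ℝ) (hφ : ContDiff ℝ 2 φ)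
    (hφpos : ∀ x, 0 ≤ φ x) (M : ℝ)
    (hM2 : ∀ y, |fderiv ℝ (fun z => fderiv ℝ φ z (Pi.single l 1)) y (Pi.single l 1)| ≤ M)
    (x : Fin d → ℝ) :
    (fderiv ℝ φ x (Pi.single l 1))^2 ≤ 2 * M * φ x := by
  set v : Fin d → ℝ := Pi.single l 1 with hv
  set Dl : (Fin d → ℝ) → ℝ := fun z => fderiv ℝ φ z v with hDl
  have hφd : Differentiable ℝ φ := hφ.differentiable (by norm_num)
  have hDlc : ContDiff ℝ 1 Dl := by
    have h1 : ContDiff ℝ 1 (fderiv ℝ φ) := hφ.fderiv_right (by norm_num)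
    exact (ContinuousLinearMap.apply ℝ ℝ v).contDiff.comp h1
  have hDld : Differentiable ℝ Dl := hDlc.differentiable (by norm_num)
  -- line
  have hline : ∀ t : ℝ, HasDerivAt (fun s : ℝ => x + s • v) v t := by
    intro t
    simpa using ((hasDerivAt_id t).smul_const v).const_add x
  set ψ : ℝ → ℝ := fun s => Dl (x + s • v) with hψ
  have hψd : ∀ t, HasDerivAt ψ (fderiv ℝ Dl (x + t • v) v) t := by
    intro t
    exact ((hDld _).hasFDerivAt).comp_hasDerivAt t (hline t)
  set a : ℝ := Dl x with ha
  have hψ0 : ψ 0 = a := by simp [hψ, ha]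
  have hlip : ∀ s : ℝ, |ψ s - a| ≤ M * |s| := by
    intro s
    have := Convex.norm_image_sub_le_of_norm_deriv_le (f := ψ) (s := Set.univ) (C := M)
      (fun t _ => (hψd t).differentiableAt)
      (fun t _ => by rw [(hψd t).deriv]; simpa using hM2 (x + t • v))
      convex_univ (Set.mem_univ 0) (Set.mem_univ s)
    simpa [hψ0, Real.norm_eq_abs] using this
  set g : ℝ → ℝ := fun t => φ (x + t • v) with hg
  have hgd : ∀ t, HasDerivAt g (ψ t) t := fun t =>
    ((hφd _).hasFDerivAt).comp_hasDerivAt t (hline t)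
  set F : ℝ → ℝ := fun t => φ x + a * t + M * t^2 / 2 - g t with hF
  have hFd : ∀ t, HasDerivAt F (a + M * t - ψ t) t := by
    intro t
    have h1 : HasDerivAt (fun t : ℝ => φ x + a * t + M * t^2 / 2) (a + M * t) t := by
      have h0 := (((hasDerivAt_const t (φ x)).add ((hasDerivAt_id t).const_mul a)).add
          (((hasDerivAt_pow 2 t).const_mul M).div_const 2))
      refine h0.congr_deriv ?_
      push_cast
      ring
    exact h1.sub (hgd t)
  have hFnn : ∀ t : ℝ, 0 ≤ F t := by
    have hF0 : F 0 = 0 := by simp [hF, hg]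
    intro t
    rcases le_total 0 t with htp | htn
    · have hmono : MonotoneOn F (Set.Ici (0:ℝ)) := by
        apply monotoneOn_of_deriv_nonneg (convex_Ici 0)
          (fun s _ => (hFd s).continuousAt.continuousWithinAt)
          (fun s _ => (hFd s).differentiableAt.differentiableWithinAt)
        intro s hs
        rw [(hFd s).deriv]
        rw [interior_Ici] at hs
        have := hlip s
        have hs' : (0:ℝ) ≤ s := le_of_lt hs
        rw [abs_of_nonneg hs'] at this
        have := abs_le.mp this
        linarith [this.2]
      have := hmono (Set.mem_Ici.mpr le_rfl) (Set.mem_Ici.mpr htp) htp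
      rw [hF0] at this; exact this
    · have hanti : AntitoneOn F (Set.Iic (0:ℝ)) := by
        apply antitoneOn_of_deriv_nonpos (convex_Iic 0)
          (fun s _ => (hFd s).continuousAt.continuousWithinAt)
          (fun s _ => (hFd s).differentiableAt.differentiableWithinAt)
        intro s hs
        rw [(hFd s).deriv]
        rw [interior_Iic] at hs
        have := hlip s
        have hs' : s ≤ (0:ℝ) := le_of_lt hs
        rw [abs_of_nonpos hs'] at this
        have := abs_le.mp this
        linarith [this.1]
      have := hanti (Set.mem_Iic.mpr htn) (Set.mem_Iic.mpr le_rfl) htn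
      rw [hF0] at this; exact this
  have hquad : ∀ t : ℝ, 0 ≤ (M/2) * (t * t) + a * t + φ x := by
    intro t
    have h1 := hFnn t
    have h2 := hφpos (x + t • v)
    have : g t = φ (x + t • v) := rfl
    simp only [hF] at h1
    nlinarith [h1, h2]
  have := discrim_le_zero hquad
  rw [discrim] at this
  have hax : fderiv ℝ φ x (Pi.single l 1) = a := rfl
  rw [hax]
  nlinarith [this]



lemma key {d : ℕ} (Ct : Matrix (Fin d) (Fin d) ℂ)
    (hsec : ∀ ξ : Fin d → ℂ, 0 ≤ (Ct.mulVec ξ ⬝ᵥ star ξ).re)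
    (N : ℝ)
    (hN : ∀ η : Fin d → ℂ,
      (((Matrix.of fun k m => (((Ct k m).re + (Ct m k).re) / 2 : ℂ)).mulVec η) ⬝ᵥ star η).re ≤
        N * ∑ i, ‖η i‖ ^ 2)
    (η : Fin d → ℂ) :
    ∑ i, ‖((Matrix.of fun k m => ((((Ct k m).im - (Ct m k).im) / 2 : ℝ) : ℂ)).mulVec η) i‖ ^ 2 ≤
      4 * N * (((Matrix.of fun k m => (((Ct k m).re + (Ct m k).re) / 2 : ℂ)).mulVec η) ⬝ᵥ star η).re := by
  set Rs : Matrix (Fin d) (Fin d) ℂ :=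
    Matrix.of fun k m => (((Ct k m).re + (Ct m k).re) / 2 : ℂ) with hRs
  set Ba : Matrix (Fin d) (Fin d) ℂ :=
    Matrix.of fun k m => ((((Ct k m).im - (Ct m k).im) / 2 : ℝ) : ℂ) with hBa
  set Hm : Matrix (Fin d) (Fin d) ℂ := Rs + Complex.I • Ba with hHm
  -- conjugation of sesquilinear pairings
  have pair_conj : ∀ (A : Matrix (Fin d) (Fin d) ℂ) (v w : Fin d → ℂ),
      star (A.mulVec v ⬝ᵥ star w) = Aᴴ.mulVec w ⬝ᵥ star v := by
    intro A v w
    rw [dotProduct_comm, star_dotProduct, star_star, star_mulVec, ← dotProduct_mulVec,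
      dotProduct_comm]
  -- Hm is (Ct + Ctᴴ)/2
  have hHm2 : Hm = (1/2 : ℂ) • (Ct + Ctᴴ) := by
    ext k m
    simp only [hHm, hRs, hBa, Matrix.add_apply, Matrix.smul_apply, Matrix.of_apply,
      Matrix.conjTranspose_apply, smul_eq_mul]
    apply Complex.ext <;>
      simp [Complex.add_re, Complex.add_im, Complex.mul_re, Complex.mul_im, Complex.star_def,
        Complex.conj_re, Complex.conj_im] <;> ring
  have hHmherm : Hmᴴ = Hm := by
    rw [hHm2]
    simp [Matrix.conjTranspose_smul, Matrix.conjTranspose_add, Complex.star_def, map_div₀]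
    rw [add_comm]
  -- u is the (real) quadratic form of Hm, equal to re of quadratic form of Ct
  set u : (Fin d → ℂ) → ℝ := fun ζ => (Hm.mulVec ζ ⬝ᵥ star ζ).re with hu
  have hu0 : ∀ ζ, 0 ≤ u ζ := by
    intro ζ
    have h1 : Hm.mulVec ζ ⬝ᵥ star ζ
        = (1/2 : ℂ) * ((Ct.mulVec ζ ⬝ᵥ star ζ) + star (Ct.mulVec ζ ⬝ᵥ star ζ)) := by
      rw [pair_conj Ct ζ ζ, hHm2]
      simp [Matrix.add_mulVec, Matrix.smul_mulVec, add_dotProduct, smul_dotProduct,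
        smul_eq_mul, mul_add]
    have := hsec ζ
    simp only [hu, h1]
    simp only [Complex.star_def, Complex.add_conj]
    simp [Complex.mul_re, Complex.ofReal_re]
    linarith
  -- real-entried matrices commute with star
  have real_star : ∀ (A : Matrix (Fin d) (Fin d) ℂ), (∀ k m, star (A k m) = A k m) →
      ∀ ζ, A.mulVec (star ζ) = star (A.mulVec ζ) := by
    intro A hA ζ
    funext i
    simp only [Matrix.mulVec, dotProduct, Pi.star_apply, star_sum]
    exact Finset.sum_congr rfl fun m _ => by rw [star_mul', hA, mul_comm]
  have hRsreal : ∀ k m, star (Rs k m) = Rs k m := by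
    intro k m
    simp [hRs, Complex.star_def, map_div₀, map_add, Complex.conj_ofReal]
  have hBareal : ∀ k m, star (Ba k m) = Ba k m := by
    intro k m
    simp [hBa, Complex.star_def, Complex.conj_ofReal]
  have hRsstar := real_star Rs hRsreal
  have hBastar := real_star Ba hBareal
  -- star of quadratic forms of real matrices
  have star_quad : ∀ (A : Matrix (Fin d) (Fin d) ℂ), (∀ k m, star (A k m) = A k m) →
      ∀ ζ, A.mulVec (star ζ) ⬝ᵥ star (star ζ) = star (A.mulVec ζ ⬝ᵥ star ζ) := by
    intro A hA ζ
    rw [star_star, real_star A hA, star_dotProduct, dotProduct_comm (star ζ)]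
  -- splitting: u ζ + u (star ζ) = 2 * r ζ
  have hsplit : ∀ ζ, u ζ + u (star ζ) = 2 * (Rs.mulVec ζ ⬝ᵥ star ζ).re := by
    intro ζ
    have e1 : Hm.mulVec ζ ⬝ᵥ star ζ
        = (Rs.mulVec ζ ⬝ᵥ star ζ) + Complex.I * (Ba.mulVec ζ ⬝ᵥ star ζ) := by
      simp [hHm, Matrix.add_mulVec, Matrix.smul_mulVec, add_dotProduct,
        smul_dotProduct, smul_eq_mul]
    have e2 : Hm.mulVec (star ζ) ⬝ᵥ star (star ζ)
        = star (Rs.mulVec ζ ⬝ᵥ star ζ) + Complex.I * star (Ba.mulVec ζ ⬝ᵥ star ζ) := by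
      rw [hHm]
      rw [Matrix.add_mulVec, add_dotProduct, Matrix.smul_mulVec, smul_dotProduct,
        star_quad Rs hRsreal, star_quad Ba hBareal]
      simp [smul_eq_mul]
    simp only [hu, e1, e2]
    simp [Complex.add_re, Complex.mul_re, Complex.I_re, Complex.I_im, Complex.star_def,
      Complex.conj_re, Complex.conj_im]
    ring
  -- Cauchy-Schwarz via discriminant
  have hCS : ∀ (w ζ : Fin d → ℂ), ((Hm.mulVec ζ ⬝ᵥ star w).im)^2 ≤ u w * u ζ := by
    intro w ζ
    have hP : Hm.mulVec w ⬝ᵥ star ζ = star (Hm.mulVec ζ ⬝ᵥ star w) := by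
      have h := pair_conj Hm ζ w
      rw [hHmherm] at h
      exact h.symm
    set Q : ℂ := Hm.mulVec ζ ⬝ᵥ star w with hQ
    have hexp : ∀ lam : ℝ, Hm.mulVec ((lam:ℂ) • w + Complex.I • ζ)
          ⬝ᵥ star ((lam:ℂ) • w + Complex.I • ζ)
        = (lam:ℂ)^2 * (Hm.mulVec w ⬝ᵥ star w)
          + (lam:ℂ) * (Complex.I * (Q - star Q)) + (Hm.mulVec ζ ⬝ᵥ star ζ) := by
      intro lam
      rw [← hP, hQ]
      simp only [Matrix.mulVec_add, Matrix.mulVec_smul, star_add, star_smul,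
        add_dotProduct, dotProduct_add, smul_dotProduct, dotProduct_smul,
        Complex.star_def, Complex.conj_ofReal, Complex.conj_I, smul_eq_mul]
      ring_nf
      simp [Complex.I_sq]
    have key0 : ∀ lam : ℝ, 0 ≤ u w * (lam * lam) + (-(2 * Q.im)) * lam + u ζ := by
      intro lam
      have h := hu0 ((lam:ℂ) • w + Complex.I • ζ)
      rw [hu] at h
      simp only at h
      rw [hexp lam] at h
      have hre : ((lam:ℂ)^2 * (Hm.mulVec w ⬝ᵥ star w)
          + (lam:ℂ) * (Complex.I * (Q - star Q)) + (Hm.mulVec ζ ⬝ᵥ star ζ)).re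
          = u w * (lam * lam) + (-(2 * Q.im)) * lam + u ζ := by
        simp [Complex.add_re, Complex.mul_re, Complex.mul_im, Complex.sub_re, Complex.sub_im,
          Complex.I_re, Complex.I_im, Complex.star_def, Complex.conj_re, Complex.conj_im,
          ← Complex.ofReal_pow, Complex.ofReal_re, Complex.ofReal_im, hu]
        ring
      rw [hre] at h
      exact h
    have hd := discrim_le_zero key0
    rw [discrim] at hd
    nlinarith [hd]
  -- endgame
  set w : Fin d → ℂ := Ba.mulVec η with hw
  set W : ℝ := ∑ i, ‖w i‖ ^ 2 with hW
  have hWnn : 0 ≤ W := Finset.sum_nonneg fun i _ => by positivity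
  have hdot1 : w ⬝ᵥ star w = (W:ℂ) := by
    simp only [dotProduct, Pi.star_apply, Complex.star_def, Complex.mul_conj, hW]
    push_cast
    refine Finset.sum_congr rfl fun i _ => ?_
    rw [Complex.normSq_eq_norm_sq]
    norm_cast
  have hdot2 : star w ⬝ᵥ w = (W:ℂ) := by rw [dotProduct_comm]; exact hdot1
  have hQ1 : Hm.mulVec η ⬝ᵥ star w
      = (Rs.mulVec η ⬝ᵥ star w) + Complex.I * (W:ℂ) := by
    rw [hHm, Matrix.add_mulVec, add_dotProduct, Matrix.smul_mulVec, smul_dotProduct,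
      ← hw, hdot1]
    simp [smul_eq_mul]
  have hQ2 : Hm.mulVec (star η) ⬝ᵥ star (star w)
      = star (Rs.mulVec η ⬝ᵥ star w) + Complex.I * (W:ℂ) := by
    rw [star_star, hHm, Matrix.add_mulVec, add_dotProduct, Matrix.smul_mulVec,
      smul_dotProduct, hRsstar, hBastar, ← hw, hdot2]
    have : star (Rs.mulVec η) ⬝ᵥ w = star (Rs.mulVec η ⬝ᵥ star w) := by
      rw [star_dotProduct, dotProduct_comm (star w)]
    rw [this]
    simp [smul_eq_mul]
  have h1 := hCS w η
  have h2 := hCS (star w) (star η)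
  rw [hQ1] at h1
  rw [hQ2] at h2
  set A : ℂ := Rs.mulVec η ⬝ᵥ star w with hA
  have him1 : (A + Complex.I * (W:ℂ)).im = A.im + W := by
    simp [Complex.add_im, Complex.mul_im, Complex.I_re, Complex.I_im]
  have him2 : (star A + Complex.I * (W:ℂ)).im = -A.im + W := by
    simp [Complex.add_im, Complex.mul_im, Complex.I_re, Complex.I_im, Complex.star_def,
      Complex.conj_im]
  rw [him1] at h1
  rw [him2] at h2
  have hsw := hsplit w
  have hsη := hsplit η
  have hrw : (Rs.mulVec w ⬝ᵥ star w).re ≤ N * W := hN w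
  have hu1 := hu0 w
  have hu2 := hu0 (star w)
  have hu3 := hu0 η
  have hu4 := hu0 (star η)
  set rη : ℝ := (Rs.mulVec η ⬝ᵥ star η).re with hrη
  have hrηnn : 0 ≤ rη := by linarith
  -- goal is W ≤ 4 * N * rη
  show W ≤ 4 * N * rη
  have hprod : (A.im + W)^2 + (-A.im + W)^2 ≤ u w * u η + u (star w) * u (star η) := by
    linarith
  have hmain : 4 * W^2 ≤ 8 * ((Rs.mulVec w ⬝ᵥ star w).re * rη) := by
    nlinarith [hprod, mul_nonneg hu1 hu4, mul_nonneg hu2 hu3, sq_nonneg (A.im)]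
  rcases eq_or_lt_of_le hWnn with hW0 | hWpos
  · rw [← hW0]
    rcases eq_or_lt_of_le hrηnn with hr0 | hrpos
    · rw [← hr0]; ring_nf; simp
    · have hNη := hN η
      have hSnn : (0:ℝ) ≤ ∑ i, ‖η i‖ ^ 2 := Finset.sum_nonneg fun i _ => by positivity
      have hNpos : 0 < N := by
        by_contra hc
        push_neg at hc
        nlinarith
      positivity
  · have : 4 * W^2 ≤ 8 * (N * W * rη) := by
      nlinarith [hmain, mul_le_mul_of_nonneg_right hrw hrηnn]
    nlinarith [this, hWpos]

/-- Let `φ ≥ 0` be a real `W^{2,∞}` function (C² with `M` bounding `φ` and all its first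
and second partials), and `C̃` a constant complex matrix taking values in `Σ_θ`, with
symmetric real part `R̃_s` (operator-norm bound `N`) and antisymmetric imaginary part
`B̃_a`. For `C = φ C̃` one has `B_a = φ B̃_a`, `R_s = φ R̃_s`, and for every `l`, every
point `x` and every complex symmetric `U`:
`‖(∂_l B_a)(x) U‖²_HS ≤ 8 M N tr(U R_s(x) Ū)`. -/
theorem stmt_18 (d : ℕ) (θ : ℝ) (hθ : θ ∈ Set.Ico 0 (Real.pi / 2))
    (Ct : Matrix (Fin d) (Fin d) ℂ)
    (hsec : ∀ ξ : Fin d → ℂ,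
      0 ≤ (Ct.mulVec ξ ⬝ᵥ star ξ).re ∧
      |(Ct.mulVec ξ ⬝ᵥ star ξ).im| ≤ Real.tan θ * (Ct.mulVec ξ ⬝ᵥ star ξ).re)
    (N : ℝ)
    (hN : ∀ η : Fin d → ℂ,
      (((Matrix.of fun k l => (((Ct k l).re + (Ct l k).re) / 2 : ℂ)).mulVec η) ⬝ᵥ star η).re ≤
        N * ∑ i, ‖η i‖ ^ 2)
    (φ : (Fin d → ℝ) → ℝ) (hφ : ContDiff ℝ 2 φ) (hφpos : ∀ x, 0 ≤ φ x)
    (M : ℝ)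
    (hM0 : ∀ x, φ x ≤ M)
    (hM1 : ∀ x, ∀ j : Fin d, |fderiv ℝ φ x (Pi.single j 1)| ≤ M)
    (hM2 : ∀ x, ∀ j k : Fin d,
      |fderiv ℝ (fun y => fderiv ℝ φ y (Pi.single j 1)) x (Pi.single k 1)| ≤ M)
    (l : Fin d) (x : Fin d → ℝ)
    (U : Matrix (Fin d) (Fin d) ℂ) (hU : Uᵀ = U) :
    ∑ i, ∑ j, ‖(((fderiv ℝ φ x (Pi.single l 1) : ℝ) : ℂ) •
        ((Matrix.of fun k m => ((((Ct k m).im - (Ct m k).im) / 2 : ℝ) : ℂ)) * U)) i j‖ ^ 2 ≤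
      8 * M * N *
        ((U * (((φ x : ℝ) : ℂ) • (Matrix.of fun k m => (((Ct k m).re + (Ct m k).re) / 2 : ℂ))) *
          (U.map (starRingEnd ℂ))).trace).re := by
  classical
  set Rs : Matrix (Fin d) (Fin d) ℂ :=
    Matrix.of fun k m => (((Ct k m).re + (Ct m k).re) / 2 : ℂ) with hRsdef
  set Ba : Matrix (Fin d) (Fin d) ℂ :=
    Matrix.of fun k m => ((((Ct k m).im - (Ct m k).im) / 2 : ℝ) : ℂ) with hBadef
  set a : ℝ := fderiv ℝ φ x (Pi.single l 1) with hadef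
  have ha2 : a ^ 2 ≤ 2 * M * φ x :=
    glaeser_aux l φ hφ hφpos M (fun y => hM2 y l l) x
  have ha0 : 0 ≤ a ^ 2 := sq_nonneg a
  have hsym : ∀ j k, U j k = U k j := by
    intro j k
    conv_lhs => rw [← hU]
    simp [Matrix.transpose_apply]
  -- columns
  set ξ : Fin d → Fin d → ℂ := fun j k => U k j with hξdef
  -- Ba is real entried
  have hBastar : ∀ ζ, Ba.mulVec (star ζ) = star (Ba.mulVec ζ) := by
    intro ζ
    funext i
    simp only [Matrix.mulVec, dotProduct, Pi.star_apply, star_sum]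
    refine Finset.sum_congr rfl fun m _ => ?_
    simp [hBadef, Complex.star_def, _root_.map_mul, Complex.conj_ofReal]
  -- per-column key estimate
  have hkey : ∀ j, ∑ i, ‖(Ba.mulVec (star (ξ j))) i‖ ^ 2
      ≤ 4 * N * ((Rs.mulVec (star (ξ j)) ⬝ᵥ star (star (ξ j))).re) :=
    fun j => key Ct (fun ζ => (hsec ζ).1) N hN (star (ξ j))
  -- identify LHS columns
  have hmv : ∀ j i, (Ba * U) i j = (Ba.mulVec (ξ j)) i := by
    intro j i
    simp [Matrix.mul_apply, Matrix.mulVec, dotProduct, hξdef]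
  have hcol : ∀ j, ∑ i, ‖(Ba * U) i j‖ ^ 2 = ∑ i, ‖(Ba.mulVec (star (ξ j))) i‖ ^ 2 := by
    intro j
    refine Finset.sum_congr rfl fun i _ => ?_
    rw [hmv j i, hBastar, Pi.star_apply, norm_star]
  -- LHS rearrangement
  have hLHS : ∑ i, ∑ j, ‖(((a : ℝ) : ℂ) • (Ba * U)) i j‖ ^ 2
      = a ^ 2 * ∑ j, ∑ i, ‖(Ba.mulVec (star (ξ j))) i‖ ^ 2 := by
    rw [Finset.sum_comm, Finset.mul_sum]
    refine Finset.sum_congr rfl fun j _ => ?_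
    rw [← hcol j, Finset.mul_sum]
    refine Finset.sum_congr rfl fun i _ => ?_
    rw [Matrix.smul_apply, norm_smul, Complex.norm_real, mul_pow, Real.norm_eq_abs, sq_abs]
  -- trace identification
  have hdiag : ∀ j, (U * (((φ x : ℝ) : ℂ) • Rs) * U.map (starRingEnd ℂ)) j j
      = ((φ x : ℝ) : ℂ) * (Rs.mulVec (star (ξ j)) ⬝ᵥ star (star (ξ j))) := by
    intro j
    rw [star_star]
    simp only [Matrix.mul_apply, Matrix.smul_apply, Matrix.map_apply, Matrix.mulVec,
      dotProduct, Pi.star_apply, smul_eq_mul, Finset.sum_mul, Finset.mul_sum]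
    rw [Finset.sum_comm]
    refine Finset.sum_congr rfl fun k _ => ?_
    refine Finset.sum_congr rfl fun m _ => ?_
    rw [hξdef]
    simp only
    rw [hsym j k]
    simp only [Complex.star_def]
    ring
  have htr : ((U * (((φ x : ℝ) : ℂ) • Rs) * U.map (starRingEnd ℂ)).trace).re
      = φ x * ∑ j, (Rs.mulVec (star (ξ j)) ⬝ᵥ star (star (ξ j))).re := by
    rw [Matrix.trace]
    have : ∀ j, Matrix.diag (U * (((φ x : ℝ) : ℂ) • Rs) * U.map (starRingEnd ℂ)) j
        = ((φ x : ℝ) : ℂ) * (Rs.mulVec (star (ξ j)) ⬝ᵥ star (star (ξ j))) := fun j => hdiag j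
    rw [Finset.sum_congr rfl fun j _ => this j, ← Finset.mul_sum, Complex.re_ofReal_mul,
      Complex.re_sum]
  -- combine
  rw [hLHS, htr]
  have hsum1 : ∑ j, ∑ i, ‖(Ba.mulVec (star (ξ j))) i‖ ^ 2
      ≤ ∑ j, 4 * N * ((Rs.mulVec (star (ξ j)) ⬝ᵥ star (star (ξ j))).re) :=
    Finset.sum_le_sum fun j _ => hkey j
  have hsumnn : 0 ≤ ∑ j, 4 * N * ((Rs.mulVec (star (ξ j)) ⬝ᵥ star (star (ξ j))).re) := by
    refine le_trans ?_ hsum1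
    exact Finset.sum_nonneg fun j _ => Finset.sum_nonneg fun i _ => by positivity
  calc a ^ 2 * ∑ j, ∑ i, ‖(Ba.mulVec (star (ξ j))) i‖ ^ 2
      ≤ a ^ 2 * ∑ j, 4 * N * ((Rs.mulVec (star (ξ j)) ⬝ᵥ star (star (ξ j))).re) :=
        mul_le_mul_of_nonneg_left hsum1 ha0
    _ ≤ (2 * M * φ x) * ∑ j, 4 * N * ((Rs.mulVec (star (ξ j)) ⬝ᵥ star (star (ξ j))).re) :=
        mul_le_mul_of_nonneg_right ha2 hsumnn
    _ = 8 * M * N * (φ x * ∑ j, (Rs.mulVec (star (ξ j)) ⬝ᵥ star (star (ξ j))).re) := by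
        rw [← Finset.mul_sum]
        ring
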